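/- Every dead end is invertible in the universe E of dead-ending games: if G is a dead Left end or dead Right end, then G + Ḡ ≡ 0 (mod E), i.e., o⁻(G + Ḡ + X) = o⁻(X) for all dead-ending games X. In particular every integer n (in normal-play canonical form) is invertible modulo E. -/

import Mathlib

namespace SetTheory

universe u

/-- Pre-games, as formerly defined in Mathlib (`SetTheory.PGame`). -/
inductive PGame : Type (u + 1)
  | mk : ∀ α β : Type u, (α → PGame) → (β → PGame) → PGame

namespace PGame

/-- The indexing type for allowable moves by Left. -/
def LeftMoves : PGame → Type u
  | mk l _ _ _ => l

/-- The indexing type for allowable moves by Right. -/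
def RightMoves : PGame → Type u
  | mk _ r _ _ => r

/-- The new game after Left makes an allowed move. -/
def moveLeft : ∀ g : PGame, LeftMoves g → PGame
  | mk _l _ L _ => L

/-- The new game after Right makes an allowed move. -/
def moveRight : ∀ g : PGame, RightMoves g → PGame
  | mk _ _r _ R => R

/-- `x` is an option of `y`. -/
inductive IsOption : PGame → PGame → Prop
  | moveLeft {x : PGame} (i : x.LeftMoves) : IsOption (x.moveLeft i) x
  | moveRight {x : PGame} (i : x.RightMoves) : IsOption (x.moveRight i) x

/-- Transitive closure of `IsOption`. -/
def Subsequent : PGame → PGame → Prop :=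
  Relation.TransGen IsOption

instance : Zero PGame :=
  ⟨⟨PEmpty, PEmpty, PEmpty.elim, PEmpty.elim⟩⟩

/-- The negation of `{L | R}` is `{-R | -L}`. -/
def neg : PGame → PGame
  | ⟨l, r, L, R⟩ => ⟨r, l, fun i => neg (R i), fun i => neg (L i)⟩

instance : Neg PGame :=
  ⟨neg⟩

noncomputable instance : Add PGame.{u} :=
  ⟨fun x y => by
    induction x generalizing y with | mk xl xr _ _ IHxl IHxr => _
    induction y with | mk yl yr yL yR IHyl IHyr => _
    have y := mk yl yr yL yR
    refine ⟨xl ⊕ yl, xr ⊕ yr, Sum.rec ?_ ?_, Sum.rec ?_ ?_⟩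
    · exact fun i => IHxl i y
    · exact IHyl
    · exact fun i => IHxr i y
    · exact IHyr⟩

end PGame

end SetTheory

open SetTheory

namespace Misere

/-- Misère winning: `(wins G).1` means Left, moving first on `G`, wins under misère play;
`(wins G).2` means Right, moving first, wins. The player unable to move wins. -/
def wins : PGame → Prop × Prop
  | ⟨α, β, L, R⟩ =>
    (IsEmpty α ∨ ∃ i, ¬ (wins (L i)).2,
     IsEmpty β ∨ ∃ j, ¬ (wins (R j)).1)

/-- Left wins moving first under misère play. -/
def LeftFirst (G : PGame) : Prop := (wins G).1

/-- Right wins moving first under misère play. -/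
def RightFirst (G : PGame) : Prop := (wins G).2

/-- Normal-play winning: `(nwins G).1` means Left moving first wins (player unable to move loses). -/
def nwins : PGame → Prop × Prop
  | ⟨α, β, L, R⟩ =>
    (∃ i, ¬ (nwins (L i)).2,
     ∃ j, ¬ (nwins (R j)).1)

/-- Outcome classes. -/
inductive Outcome : Type
  | L | R | N | P
  deriving DecidableEq

/-- The partial order on outcomes: L > P > R, L > N > R, with P and N incomparable. -/
instance : LE Outcome := ⟨fun a b => a = b ∨ a = .R ∨ b = .L⟩

open Classical in
/-- The misère outcome of a game. -/
noncomputable def misereOutcome (G : PGame) : Outcome :=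
  if (wins G).1 then (if (wins G).2 then .N else .L)
  else (if (wins G).2 then .R else .P)

open Classical in
/-- The normal-play outcome of a game. -/
noncomputable def normalOutcome (G : PGame) : Outcome :=
  if (nwins G).1 then (if (nwins G).2 then .N else .L)
  else (if (nwins G).2 then .R else .P)

/-- A game is dicot if every subposition has a Left option iff it has a Right option. -/
def Dicot : PGame → Prop
  | ⟨α, β, L, R⟩ => (IsEmpty α ↔ IsEmpty β) ∧ (∀ i, Dicot (L i)) ∧ (∀ j, Dicot (R j))

/-- A dead Left end: a Left end all of whose followers are Left ends. -/
def DeadLeftEnd : PGame → Prop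
  | ⟨α, _β, _L, R⟩ => IsEmpty α ∧ ∀ j, DeadLeftEnd (R j)

/-- A dead Right end: a Right end all of whose followers are Right ends. -/
def DeadRightEnd : PGame → Prop
  | ⟨_α, β, L, _R⟩ => IsEmpty β ∧ ∀ i, DeadRightEnd (L i)

/-- A follower of `G` is any position reachable from `G`, including `G` itself. -/
def Follower (H G : PGame) : Prop := H = G ∨ PGame.Subsequent H G

/-- An end: a position where some player has no move. -/
def IsEnd (G : PGame) : Prop := IsEmpty G.LeftMoves ∨ IsEmpty G.RightMoves

/-- A game is dead-ending if every one of its end followers is a dead end. -/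
def DeadEnding (G : PGame) : Prop :=
  ∀ H, Follower H G → IsEnd H → (DeadLeftEnd H ∨ DeadRightEnd H)

end Misere

namespace Misere

/-- The integer `n ≥ 0` in normal-play canonical form: `0 = {·|·}`, `n+1 = {n | ·}`. -/
def pint : ℕ → PGame
  | 0 => 0
  | n + 1 => PGame.mk PUnit PEmpty (fun _ => pint n) (fun x => x.elim)

end Misere

namespace SetTheory
namespace PGame

universe u

theorem wf_isOption : WellFounded IsOption :=
  ⟨fun x => by
    induction x with
    | mk l r L R IHl IHr =>
      exact Acc.intro _ (fun y h => by
        cases h with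
        | moveLeft i => exact IHl i
        | moveRight j => exact IHr j)⟩

instance : WellFoundedRelation PGame := ⟨Subsequent, wf_isOption.transGen⟩

theorem Subsequent.trans {x y z : PGame} (h₁ : Subsequent x y) (h₂ : Subsequent y z) :
    Subsequent x z := Relation.TransGen.trans h₁ h₂

theorem Subsequent.moveLeft {x : PGame} (i : x.LeftMoves) : Subsequent (x.moveLeft i) x :=
  Relation.TransGen.single (IsOption.moveLeft i)

theorem Subsequent.moveRight {x : PGame} (j : x.RightMoves) : Subsequent (x.moveRight j) x :=
  Relation.TransGen.single (IsOption.moveRight j)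

theorem Subsequent.mk_left {xl xr : Type u} (xL : xl → PGame.{u}) (xR : xr → PGame.{u}) (i : xl) :
    Subsequent (xL i) (mk xl xr xL xR) := Subsequent.moveLeft (x := mk xl xr xL xR) i

theorem Subsequent.mk_right {xl xr : Type u} (xL : xl → PGame.{u}) (xR : xr → PGame.{u}) (j : xr) :
    Subsequent (xR j) (mk xl xr xL xR) := Subsequent.moveRight (x := mk xl xr xL xR) j

instance : InvolutiveNeg PGame :=
  { toNeg := inferInstance
    neg_neg := fun x => by
      induction x with
      | mk xl xr xL xR ihL ihR =>
        show mk xl xr (fun i => - -xL i) (fun j => - -xR j) = mk xl xr xL xR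
        simp only [ihL, ihR] }

theorem leftMoves_neg : ∀ x : PGame, (-x).LeftMoves = x.RightMoves
  | ⟨_, _, _, _⟩ => rfl

theorem rightMoves_neg : ∀ x : PGame, (-x).RightMoves = x.LeftMoves
  | ⟨_, _, _, _⟩ => rfl

def toLeftMovesNeg {x : PGame} : x.RightMoves ≃ (-x).LeftMoves :=
  Equiv.cast (leftMoves_neg x).symm

def toRightMovesNeg {x : PGame} : x.LeftMoves ≃ (-x).RightMoves :=
  Equiv.cast (rightMoves_neg x).symm

theorem moveLeft_neg {x : PGame} (i) : (-x).moveLeft (toLeftMovesNeg i) = -x.moveRight i := by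
  cases x; rfl

theorem moveRight_neg {x : PGame} (i) : (-x).moveRight (toRightMovesNeg i) = -x.moveLeft i := by
  cases x; rfl

theorem moveLeft_neg' {x : PGame} (i) : (-x).moveLeft i = -x.moveRight (toLeftMovesNeg.symm i) := by
  cases x; rfl

theorem moveRight_neg' {x : PGame} (i) :
    (-x).moveRight i = -x.moveLeft (toRightMovesNeg.symm i) := by
  cases x; rfl

theorem isOption_neg_of {x y : PGame} (h : IsOption x y) : IsOption (-x) (-y) := by
  cases h with
  | moveLeft i => rw [← moveRight_neg]; exact IsOption.moveRight _
  | moveRight j => rw [← moveLeft_neg]; exact IsOption.moveLeft _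

theorem isOption_neg_neg {x y : PGame} : IsOption (-x) (-y) ↔ IsOption x y :=
  ⟨fun h => by have := isOption_neg_of h; rwa [neg_neg, neg_neg] at this, isOption_neg_of⟩

theorem leftMoves_add : ∀ x y : PGame.{u}, (x + y).LeftMoves = (x.LeftMoves ⊕ y.LeftMoves)
  | ⟨_, _, _, _⟩, ⟨_, _, _, _⟩ => rfl

theorem rightMoves_add : ∀ x y : PGame.{u}, (x + y).RightMoves = (x.RightMoves ⊕ y.RightMoves)
  | ⟨_, _, _, _⟩, ⟨_, _, _, _⟩ => rfl

def toLeftMovesAdd {x y : PGame} : x.LeftMoves ⊕ y.LeftMoves ≃ (x + y).LeftMoves :=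
  Equiv.cast (leftMoves_add x y).symm

def toRightMovesAdd {x y : PGame} : x.RightMoves ⊕ y.RightMoves ≃ (x + y).RightMoves :=
  Equiv.cast (rightMoves_add x y).symm

theorem add_moveLeft_inl {x : PGame} (y : PGame) (i) :
    (x + y).moveLeft (toLeftMovesAdd (Sum.inl i)) = x.moveLeft i + y := by
  cases x; cases y; rfl

theorem add_moveLeft_inr (x : PGame) {y : PGame} (i) :
    (x + y).moveLeft (toLeftMovesAdd (Sum.inr i)) = x + y.moveLeft i := by
  cases x; cases y; rfl

theorem add_moveRight_inl {x : PGame} (y : PGame) (i) :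
    (x + y).moveRight (toRightMovesAdd (Sum.inl i)) = x.moveRight i + y := by
  cases x; cases y; rfl

theorem add_moveRight_inr (x : PGame) {y : PGame} (i) :
    (x + y).moveRight (toRightMovesAdd (Sum.inr i)) = x + y.moveRight i := by
  cases x; cases y; rfl

theorem leftMoves_add_cases {x y : PGame} (k) {P : (x + y).LeftMoves → Prop}
    (hl : ∀ i, P (toLeftMovesAdd (Sum.inl i))) (hr : ∀ i, P (toLeftMovesAdd (Sum.inr i))) :
    P k := by
  rw [← toLeftMovesAdd.apply_symm_apply k]
  rcases toLeftMovesAdd.symm k with i | i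
  · exact hl i
  · exact hr i

theorem rightMoves_add_cases {x y : PGame} (k) {P : (x + y).RightMoves → Prop}
    (hl : ∀ j, P (toRightMovesAdd (Sum.inl j))) (hr : ∀ j, P (toRightMovesAdd (Sum.inr j))) :
    P k := by
  rw [← toRightMovesAdd.apply_symm_apply k]
  rcases toRightMovesAdd.symm k with j | j
  · exact hl j
  · exact hr j

inductive Relabelling : PGame.{u} → PGame.{u} → Type (u + 1)
  | mk : ∀ {x y : PGame} (L : x.LeftMoves ≃ y.LeftMoves) (R : x.RightMoves ≃ y.RightMoves),
      (∀ i, Relabelling (x.moveLeft i) (y.moveLeft (L i))) →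
      (∀ j, Relabelling (x.moveRight j) (y.moveRight (R j))) → Relabelling x y

infixl:50 " ≡r " => PGame.Relabelling

def Relabelling.refl : ∀ x : PGame, x ≡r x
  | ⟨_, _, _, _⟩ => ⟨Equiv.refl _, Equiv.refl _, fun _ => Relabelling.refl _,
      fun _ => Relabelling.refl _⟩

def Relabelling.trans : ∀ {x y z : PGame}, x ≡r y → y ≡r z → x ≡r z
  | _, _, _, ⟨L₁, R₁, hL₁, hR₁⟩, ⟨L₂, R₂, hL₂, hR₂⟩ =>
    ⟨L₁.trans L₂, R₁.trans R₂, fun i => (hL₁ i).trans (hL₂ (L₁ i)),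
      fun j => (hR₁ j).trans (hR₂ (R₁ j))⟩

noncomputable def Relabelling.addCongr : ∀ {w x y z : PGame.{u}}, w ≡r x → y ≡r z → w + y ≡r x + z
  | ⟨wl, wr, wL, wR⟩, ⟨xl, xr, xL, xR⟩, ⟨yl, yr, yL, yR⟩, ⟨zl, zr, zL, zR⟩,
    ⟨L₁, R₁, hL₁, hR₁⟩, ⟨L₂, R₂, hL₂, hR₂⟩ => by
    let Hwx : PGame.mk wl wr wL wR ≡r PGame.mk xl xr xL xR := ⟨L₁, R₁, hL₁, hR₁⟩
    let Hyz : PGame.mk yl yr yL yR ≡r PGame.mk zl zr zL zR := ⟨L₂, R₂, hL₂, hR₂⟩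
    refine ⟨Equiv.sumCongr L₁ L₂, Equiv.sumCongr R₁ R₂, ?_, ?_⟩ <;> rintro (i | j)
    · exact Relabelling.addCongr (hL₁ i) Hyz
    · exact Relabelling.addCongr Hwx (hL₂ j)
    · exact Relabelling.addCongr (hR₁ i) Hyz
    · exact Relabelling.addCongr Hwx (hR₂ j)
termination_by w _ y _ _ _ => (w, y)
decreasing_by all_goals solve_by_elim (maxDepth := 8) [Prod.Lex.left, Prod.Lex.right, Subsequent.moveLeft, Subsequent.moveRight, Subsequent.mk_left, Subsequent.mk_right, Subsequent.trans]

noncomputable def negAddRelabelling : ∀ x y : PGame.{u}, -(x + y) ≡r -x + -y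
  | ⟨xl, xr, xL, xR⟩, ⟨yl, yr, yL, yR⟩ => by
    refine ⟨Equiv.refl _, Equiv.refl _, ?_, ?_⟩ <;> rintro (i | j)
    · exact negAddRelabelling (xR i) (mk yl yr yL yR)
    · exact negAddRelabelling (mk xl xr xL xR) (yR j)
    · exact negAddRelabelling (xL i) (mk yl yr yL yR)
    · exact negAddRelabelling (mk xl xr xL xR) (yL j)
termination_by x y => (x, y)
decreasing_by all_goals solve_by_elim (maxDepth := 8) [Prod.Lex.left, Prod.Lex.right, Subsequent.moveLeft, Subsequent.moveRight, Subsequent.mk_left, Subsequent.mk_right, Subsequent.trans]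

noncomputable def addCommRelabelling : ∀ x y : PGame.{u}, x + y ≡r y + x
  | ⟨xl, xr, xL, xR⟩, ⟨yl, yr, yL, yR⟩ => by
    refine ⟨Equiv.sumComm _ _, Equiv.sumComm _ _, ?_, ?_⟩ <;> rintro (i | j)
    · exact addCommRelabelling (xL i) (mk yl yr yL yR)
    · exact addCommRelabelling (mk xl xr xL xR) (yL j)
    · exact addCommRelabelling (xR i) (mk yl yr yL yR)
    · exact addCommRelabelling (mk xl xr xL xR) (yR j)
termination_by x y => (x, y)
decreasing_by all_goals solve_by_elim (maxDepth := 8) [Prod.Lex.left, Prod.Lex.right, Subsequent.moveLeft, Subsequent.moveRight, Subsequent.mk_left, Subsequent.mk_right, Subsequent.trans]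

end PGame
end SetTheory

namespace Misere
open PGame

theorem leftFirst_iff (G : PGame) :
    LeftFirst G ↔ (IsEmpty G.LeftMoves ∨ ∃ i, ¬ RightFirst (G.moveLeft i)) := by
  cases G; rw [LeftFirst, wins]; rfl

theorem rightFirst_iff (G : PGame) :
    RightFirst G ↔ (IsEmpty G.RightMoves ∨ ∃ j, ¬ LeftFirst (G.moveRight j)) := by
  cases G; rw [RightFirst, wins]; rfl

theorem leftFirst_of_isEmpty {G : PGame} (h : IsEmpty G.LeftMoves) : LeftFirst G :=
  (leftFirst_iff G).2 (Or.inl h)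

theorem rightFirst_of_isEmpty {G : PGame} (h : IsEmpty G.RightMoves) : RightFirst G :=
  (rightFirst_iff G).2 (Or.inl h)

theorem leftFirst_of_move {G : PGame} (i : G.LeftMoves) (h : ¬ RightFirst (G.moveLeft i)) :
    LeftFirst G := (leftFirst_iff G).2 (Or.inr ⟨i, h⟩)

theorem rightFirst_of_move {G : PGame} (j : G.RightMoves) (h : ¬ LeftFirst (G.moveRight j)) :
    RightFirst G := (rightFirst_iff G).2 (Or.inr ⟨j, h⟩)

theorem not_leftFirst_iff {G : PGame} :
    ¬ LeftFirst G ↔ (Nonempty G.LeftMoves ∧ ∀ i, RightFirst (G.moveLeft i)) := by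
  rw [leftFirst_iff]; push_neg; exact Iff.rfl

theorem not_rightFirst_iff {G : PGame} :
    ¬ RightFirst G ↔ (Nonempty G.RightMoves ∧ ∀ j, LeftFirst (G.moveRight j)) := by
  rw [rightFirst_iff]; push_neg; exact Iff.rfl

theorem wins_neg : ∀ G : PGame, (LeftFirst (-G) ↔ RightFirst G) ∧ (RightFirst (-G) ↔ LeftFirst G)
  | ⟨α, β, L, R⟩ => by
    constructor
    · show LeftFirst (PGame.mk β α (fun j => -R j) (fun i => -L i)) ↔ _
      rw [leftFirst_iff, rightFirst_iff]
      exact or_congr Iff.rfl (exists_congr fun j => not_congr (wins_neg (R j)).2)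
    · show RightFirst (PGame.mk β α (fun j => -R j) (fun i => -L i)) ↔ _
      rw [rightFirst_iff, leftFirst_iff]
      exact or_congr Iff.rfl (exists_congr fun i => not_congr (wins_neg (L i)).1)

theorem wins_relabelling : ∀ {x y : PGame}, x ≡r y →
    (LeftFirst x ↔ LeftFirst y) ∧ (RightFirst x ↔ RightFirst y)
  | x, y, ⟨L, R, hL, hR⟩ => by
    constructor
    · rw [leftFirst_iff, leftFirst_iff]
      refine or_congr L.isEmpty_congr ⟨?_, ?_⟩
      · rintro ⟨i, h⟩
        exact ⟨L i, fun h' => h ((wins_relabelling (hL i)).2.mpr h')⟩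
      · rintro ⟨i, h⟩
        refine ⟨L.symm i, fun h' => h ?_⟩
        simpa using (wins_relabelling (hL (L.symm i))).2.mp h'
    · rw [rightFirst_iff, rightFirst_iff]
      refine or_congr R.isEmpty_congr ⟨?_, ?_⟩
      · rintro ⟨j, h⟩
        exact ⟨R j, fun h' => h ((wins_relabelling (hR j)).1.mpr h')⟩
      · rintro ⟨j, h⟩
        refine ⟨R.symm j, fun h' => h ?_⟩
        simpa using (wins_relabelling (hR (R.symm j))).1.mp h'

theorem DeadLeftEnd.isEmpty : ∀ {G : PGame}, DeadLeftEnd G → IsEmpty G.LeftMoves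
  | ⟨_, _, _, _⟩, h => h.1

theorem DeadLeftEnd.moveRight : ∀ {G : PGame}, DeadLeftEnd G → ∀ j, DeadLeftEnd (G.moveRight j)
  | ⟨_, _, _, _⟩, h => h.2

theorem DeadRightEnd.isEmpty : ∀ {G : PGame}, DeadRightEnd G → IsEmpty G.RightMoves
  | ⟨_, _, _, _⟩, h => h.1

theorem DeadRightEnd.moveLeft : ∀ {G : PGame}, DeadRightEnd G → ∀ i, DeadRightEnd (G.moveLeft i)
  | ⟨_, _, _, _⟩, h => h.2

theorem DeadLeftEnd.mk {G : PGame} (h1 : IsEmpty G.LeftMoves)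
    (h2 : ∀ j, DeadLeftEnd (G.moveRight j)) : DeadLeftEnd G := by
  cases G; exact ⟨h1, h2⟩

theorem DeadRightEnd.mk {G : PGame} (h1 : IsEmpty G.RightMoves)
    (h2 : ∀ i, DeadRightEnd (G.moveLeft i)) : DeadRightEnd G := by
  cases G; exact ⟨h1, h2⟩

theorem DeadLeftEnd.neg : ∀ {G : PGame}, DeadLeftEnd G → DeadRightEnd (-G)
  | ⟨α, β, L, R⟩, h => by
    show DeadRightEnd (PGame.mk β α (fun j => -R j) (fun i => -L i))
    exact ⟨h.1, fun j => (h.2 j).neg⟩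

theorem DeadRightEnd.neg : ∀ {G : PGame}, DeadRightEnd G → DeadLeftEnd (-G)
  | ⟨α, β, L, R⟩, h => by
    show DeadLeftEnd (PGame.mk β α (fun j => -R j) (fun i => -L i))
    exact ⟨h.1, fun i => (h.2 i).neg⟩

end Misere

namespace Misere
open PGame

open Classical in
noncomputable def rdepth : PGame → ℕ
  | ⟨_, β, _, R⟩ =>
    if Nonempty β then sInf (Set.range fun j => rdepth (R j)) + 1 else 0

noncomputable def ldepth (G : PGame) : ℕ := rdepth (-G)

theorem rdepth_of_isEmpty : ∀ {G : PGame}, IsEmpty G.RightMoves → rdepth G = 0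
  | ⟨_, _, _, _⟩, h => by rw [rdepth]; exact if_neg (not_nonempty_iff.2 h)

theorem nonempty_of_rdepth_pos {G : PGame} (h : 0 < rdepth G) : Nonempty G.RightMoves := by
  by_contra hn
  rw [rdepth_of_isEmpty (not_nonempty_iff.1 hn)] at h
  exact lt_irrefl 0 h

theorem rdepth_min : ∀ {G : PGame}, Nonempty G.RightMoves →
    ∃ j, rdepth (G.moveRight j) + 1 = rdepth G
  | ⟨_, β, _, R⟩, h => by
    have h' : Nonempty β := h
    rw [rdepth, if_pos h']
    obtain ⟨j, hj⟩ := Set.mem_range.1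
      (Nat.sInf_mem (@Set.range_nonempty _ _ h' (fun j => rdepth (R j))))
    exact ⟨j, congrArg (· + 1) hj⟩

theorem rdepth_le_moveRight : ∀ (G : PGame) (j), rdepth G ≤ rdepth (G.moveRight j) + 1
  | ⟨_, β, _, R⟩, j => by
    have h' : Nonempty β := ⟨j⟩
    rw [rdepth, if_pos h']
    exact Nat.add_le_add_right (Nat.sInf_le (Set.mem_range_self j)) 1

theorem ldepth_of_isEmpty {G : PGame} (h : IsEmpty G.LeftMoves) : ldepth G = 0 :=
  rdepth_of_isEmpty (by rwa [rightMoves_neg])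

theorem nonempty_of_ldepth_pos {G : PGame} (h : 0 < ldepth G) : Nonempty G.LeftMoves := by
  have := nonempty_of_rdepth_pos h
  rwa [rightMoves_neg] at this

theorem ldepth_min {G : PGame} (h : Nonempty G.LeftMoves) :
    ∃ i, ldepth (G.moveLeft i) + 1 = ldepth G := by
  have h' : Nonempty (-G).RightMoves := by rwa [rightMoves_neg]
  obtain ⟨j, hj⟩ := rdepth_min h'
  refine ⟨toRightMovesNeg.symm j, ?_⟩
  unfold ldepth
  rw [← hj, moveRight_neg']

theorem ldepth_le_moveLeft (G : PGame) (i) : ldepth G ≤ ldepth (G.moveLeft i) + 1 := by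
  have := rdepth_le_moveRight (-G) (toRightMovesNeg i)
  unfold ldepth
  rwa [moveRight_neg] at this

/-! ### triple sums -/

theorem sum3_isEmpty_left (x y z : PGame) :
    IsEmpty (x + y + z).LeftMoves ↔
      (IsEmpty x.LeftMoves ∧ IsEmpty y.LeftMoves ∧ IsEmpty z.LeftMoves) := by
  rw [leftMoves_add, leftMoves_add, isEmpty_sum, isEmpty_sum, and_assoc]

theorem sum3_isEmpty_right (x y z : PGame) :
    IsEmpty (x + y + z).RightMoves ↔
      (IsEmpty x.RightMoves ∧ IsEmpty y.RightMoves ∧ IsEmpty z.RightMoves) := by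
  rw [rightMoves_add, rightMoves_add, isEmpty_sum, isEmpty_sum, and_assoc]

theorem leftFirst_sum3_x {x y z : PGame} (i : x.LeftMoves)
    (h : ¬ RightFirst (x.moveLeft i + y + z)) : LeftFirst (x + y + z) := by
  apply leftFirst_of_move (toLeftMovesAdd (Sum.inl (toLeftMovesAdd (Sum.inl i))))
  rwa [add_moveLeft_inl, add_moveLeft_inl]

theorem leftFirst_sum3_y {x y z : PGame} (i : y.LeftMoves)
    (h : ¬ RightFirst (x + y.moveLeft i + z)) : LeftFirst (x + y + z) := by
  apply leftFirst_of_move (toLeftMovesAdd (Sum.inl (toLeftMovesAdd (Sum.inr i))))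
  rwa [add_moveLeft_inl, add_moveLeft_inr]

theorem leftFirst_sum3_z {x y z : PGame} (i : z.LeftMoves)
    (h : ¬ RightFirst (x + y + z.moveLeft i)) : LeftFirst (x + y + z) := by
  apply leftFirst_of_move (toLeftMovesAdd (Sum.inr i))
  rwa [add_moveLeft_inr]

theorem rightFirst_sum3_x {x y z : PGame} (j : x.RightMoves)
    (h : ¬ LeftFirst (x.moveRight j + y + z)) : RightFirst (x + y + z) := by
  apply rightFirst_of_move (toRightMovesAdd (Sum.inl (toRightMovesAdd (Sum.inl j))))
  rwa [add_moveRight_inl, add_moveRight_inl]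

theorem rightFirst_sum3_y {x y z : PGame} (j : y.RightMoves)
    (h : ¬ LeftFirst (x + y.moveRight j + z)) : RightFirst (x + y + z) := by
  apply rightFirst_of_move (toRightMovesAdd (Sum.inl (toRightMovesAdd (Sum.inr j))))
  rwa [add_moveRight_inl, add_moveRight_inr]

theorem rightFirst_sum3_z {x y z : PGame} (j : z.RightMoves)
    (h : ¬ LeftFirst (x + y + z.moveRight j)) : RightFirst (x + y + z) := by
  apply rightFirst_of_move (toRightMovesAdd (Sum.inr j))
  rwa [add_moveRight_inr]

theorem sum3_moveLeft_cases {x y z : PGame} (k : (x + y + z).LeftMoves) :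
    (∃ i, (x + y + z).moveLeft k = x.moveLeft i + y + z) ∨
    (∃ i, (x + y + z).moveLeft k = x + y.moveLeft i + z) ∨
    (∃ i, (x + y + z).moveLeft k = x + y + z.moveLeft i) := by
  apply leftMoves_add_cases k
  · intro i
    rw [add_moveLeft_inl]
    apply leftMoves_add_cases i
    · intro i'
      exact Or.inl ⟨i', by rw [add_moveLeft_inl]⟩
    · intro i'
      exact Or.inr (Or.inl ⟨i', by rw [add_moveLeft_inr]⟩)
  · intro i
    exact Or.inr (Or.inr ⟨i, by rw [add_moveLeft_inr]⟩)

theorem sum3_moveRight_cases {x y z : PGame} (k : (x + y + z).RightMoves) :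
    (∃ j, (x + y + z).moveRight k = x.moveRight j + y + z) ∨
    (∃ j, (x + y + z).moveRight k = x + y.moveRight j + z) ∨
    (∃ j, (x + y + z).moveRight k = x + y + z.moveRight j) := by
  apply rightMoves_add_cases k
  · intro j
    rw [add_moveRight_inl]
    apply rightMoves_add_cases j
    · intro j'
      exact Or.inl ⟨j', by rw [add_moveRight_inl]⟩
    · intro j'
      exact Or.inr (Or.inl ⟨j', by rw [add_moveRight_inr]⟩)
  · intro j
    exact Or.inr (Or.inr ⟨j, by rw [add_moveRight_inr]⟩)

end Misere

namespace Misere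
open PGame

theorem kernel : ∀ (A B X : PGame), DeadLeftEnd A → DeadLeftEnd B → DeadRightEnd X →
    ((rdepth A ≤ rdepth B + ldepth X → RightFirst (A + -B + X)) ∧
     (rdepth B + ldepth X ≤ rdepth A → LeftFirst (A + -B + X)) ∧
     (rdepth A < rdepth B + ldepth X → ¬ LeftFirst (A + -B + X)) ∧
     (rdepth B + ldepth X < rdepth A → ¬ RightFirst (A + -B + X)))
  | A, B, X => fun hA hB hX => by
    have hBneg : IsEmpty (-B).RightMoves := by rw [rightMoves_neg]; exact hB.isEmpty
    have hBnegL : (-B).LeftMoves = B.RightMoves := leftMoves_neg B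
    refine ⟨fun hle => ?_, fun hle => ?_, fun hlt => ?_, fun hlt => ?_⟩
    · by_cases hA0 : Nonempty A.RightMoves
      · obtain ⟨j, hj⟩ := rdepth_min hA0
        apply rightFirst_sum3_x j
        apply (kernel (A.moveRight j) B X (hA.moveRight j) hB hX).2.2.1
        omega
      · apply rightFirst_of_isEmpty
        rw [sum3_isEmpty_right]
        exact ⟨not_nonempty_iff.1 hA0, hBneg, hX.isEmpty⟩
    · by_cases hB0 : Nonempty B.RightMoves
      · obtain ⟨j, hj⟩ := rdepth_min hB0
        apply leftFirst_sum3_y (toLeftMovesNeg j)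
        rw [moveLeft_neg]
        apply (kernel A (B.moveRight j) X hA (hB.moveRight j) hX).2.2.2
        omega
      · have hB' : rdepth B = 0 := rdepth_of_isEmpty (not_nonempty_iff.1 hB0)
        by_cases hX0 : Nonempty X.LeftMoves
        · obtain ⟨i, hi⟩ := ldepth_min hX0
          apply leftFirst_sum3_z i
          apply (kernel A B (X.moveLeft i) hA hB (hX.moveLeft i)).2.2.2
          omega
        · apply leftFirst_of_isEmpty
          rw [sum3_isEmpty_left]
          exact ⟨hA.isEmpty, by rw [leftMoves_neg]; exact not_nonempty_iff.1 hB0,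
            not_nonempty_iff.1 hX0⟩
    · rw [not_leftFirst_iff]
      constructor
      · by_cases hB0 : 0 < rdepth B
        · have hb : Nonempty B.RightMoves := nonempty_of_rdepth_pos hB0
          exact ⟨toLeftMovesAdd (Sum.inl (toLeftMovesAdd (Sum.inr (toLeftMovesNeg hb.some))))⟩
        · have hx : Nonempty X.LeftMoves := nonempty_of_ldepth_pos (by omega)
          exact ⟨toLeftMovesAdd (Sum.inr hx.some)⟩
      · intro k
        rcases sum3_moveLeft_cases k with ⟨i, hk⟩ | ⟨i, hk⟩ | ⟨i, hk⟩
        · exact (hA.isEmpty.false i).elim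
        · rw [hk, moveLeft_neg']
          apply (kernel A (B.moveRight (toLeftMovesNeg.symm i)) X hA
            (hB.moveRight (toLeftMovesNeg.symm i)) hX).1
          have := rdepth_le_moveRight B (toLeftMovesNeg.symm i)
          omega
        · rw [hk]
          apply (kernel A B (X.moveLeft i) hA hB (hX.moveLeft i)).1
          have := ldepth_le_moveLeft X i
          omega
    · rw [not_rightFirst_iff]
      constructor
      · have ha : Nonempty A.RightMoves := nonempty_of_rdepth_pos (by omega)
        exact ⟨toRightMovesAdd (Sum.inl (toRightMovesAdd (Sum.inl ha.some)))⟩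
      · intro k
        rcases sum3_moveRight_cases k with ⟨j, hk⟩ | ⟨j, hk⟩ | ⟨j, hk⟩
        · rw [hk]
          apply (kernel (A.moveRight j) B X (hA.moveRight j) hB hX).2.1
          have := rdepth_le_moveRight A j
          omega
        · exact (hBneg.false j).elim
        · exact (hX.isEmpty.false j).elim
termination_by A B X => (A, B, X)
decreasing_by all_goals solve_by_elim (maxDepth := 8) [Prod.Lex.left, Prod.Lex.right, Subsequent.moveLeft, Subsequent.moveRight, Subsequent.mk_left, Subsequent.mk_right, Subsequent.trans]

end Misere

namespace Misere
open PGame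

theorem DeadEnding.moveLeft {X : PGame} (h : DeadEnding X) (i) : DeadEnding (X.moveLeft i) :=
  fun H hF hE => h H (Or.inr (hF.elim (fun e => e ▸ Subsequent.moveLeft i)
    (fun s => Relation.TransGen.trans s (Subsequent.moveLeft i)))) hE

theorem DeadEnding.moveRight {X : PGame} (h : DeadEnding X) (j) : DeadEnding (X.moveRight j) :=
  fun H hF hE => h H (Or.inr (hF.elim (fun e => e ▸ Subsequent.moveRight j)
    (fun s => Relation.TransGen.trans s (Subsequent.moveRight j)))) hE

theorem subsequent_neg {x y : PGame} (h : PGame.Subsequent x y) :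
    PGame.Subsequent (-x) (-y) := by
  have h' : Relation.TransGen PGame.IsOption x y := h
  clear h
  induction h' with
  | single hxy => exact Relation.TransGen.single (PGame.isOption_neg_neg.2 hxy)
  | tail _ hbc ih => exact Relation.TransGen.tail ih (PGame.isOption_neg_neg.2 hbc)

theorem DeadEnding.neg {X : PGame} (h : DeadEnding X) : DeadEnding (-X) := by
  intro H hF hE
  have hF' : Follower (-H) X := by
    rcases hF with rfl | hs
    · exact Or.inl (neg_neg X)
    · have := subsequent_neg hs
      rw [neg_neg] at this
      exact Or.inr this
  have hE' : IsEnd (-H) := by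
    rcases hE with he | he
    · exact Or.inr (by rwa [rightMoves_neg])
    · exact Or.inl (by rwa [leftMoves_neg])
  rcases h (-H) hF' hE' with hd | hd
  · right; have := hd.neg; rwa [neg_neg] at this
  · left; have := hd.neg; rwa [neg_neg] at this

theorem main : ∀ (A X : PGame), DeadLeftEnd A → DeadEnding X →
    ((LeftFirst (A + -A + X) ↔ LeftFirst X) ∧ (RightFirst (A + -A + X) ↔ RightFirst X))
  | A, X => fun hA hX => by
    constructor
    · constructor
      · intro h
        rw [leftFirst_iff] at h
        rcases h with h | ⟨k, hk⟩
        · exact leftFirst_of_isEmpty ((sum3_isEmpty_left _ _ _).1 h).2.2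
        · rcases sum3_moveLeft_cases k with ⟨i, hkv⟩ | ⟨i, hkv⟩ | ⟨i, hkv⟩
          · exact (hA.isEmpty.false i).elim
          · rw [hkv, moveLeft_neg'] at hk
            by_contra hnl
            apply hk
            apply rightFirst_sum3_x (toLeftMovesNeg.symm i)
            intro hl
            exact hnl ((main (A.moveRight (toLeftMovesNeg.symm i)) X
              (hA.moveRight (toLeftMovesNeg.symm i)) hX).1.1 hl)
          · rw [hkv] at hk
            exact leftFirst_of_move i
              (fun hr => hk ((main A (X.moveLeft i) hA (hX.moveLeft i)).2.2 hr))
      · intro h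
        rw [leftFirst_iff] at h
        rcases h with h | ⟨i, hi⟩
        · rcases hX X (Or.inl rfl) (Or.inl h) with hd | hd
          · have h1 : LeftFirst (A + -A + X) ↔ RightFirst (-(A + -A + X)) := by
              have := (wins_neg (-(A + -A + X))).1
              rwa [neg_neg] at this
            have e : -A + -(-A) ≡r A + -A := by
              rw [neg_neg]; exact addCommRelabelling _ _
            have hrel : -(A + -A + X) ≡r (A + -A) + -X :=
              Relabelling.trans (negAddRelabelling _ _)
                (Relabelling.addCongr (Relabelling.trans (negAddRelabelling _ _) e)
                  (Relabelling.refl _))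
            rw [h1, (wins_relabelling hrel).2]
            exact (kernel A A (-X) hA hA hd.neg).1 (Nat.le_add_right _ _)
          · exact (kernel A A X hA hA hd).2.1 (by simp [ldepth_of_isEmpty h])
        · exact leftFirst_sum3_z i
            (fun hr => hi ((main A (X.moveLeft i) hA (hX.moveLeft i)).2.1 hr))
    · constructor
      · intro h
        rw [rightFirst_iff] at h
        rcases h with h | ⟨k, hk⟩
        · exact rightFirst_of_isEmpty ((sum3_isEmpty_right _ _ _).1 h).2.2
        · rcases sum3_moveRight_cases k with ⟨j, hkv⟩ | ⟨j, hkv⟩ | ⟨j, hkv⟩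
          · rw [hkv] at hk
            by_contra hnr
            apply hk
            apply leftFirst_sum3_y (toLeftMovesNeg j)
            rw [moveLeft_neg]
            intro hr
            exact hnr ((main (A.moveRight j) X (hA.moveRight j) hX).2.1 hr)
          · have hAe : IsEmpty (-A).RightMoves := by rw [rightMoves_neg]; exact hA.isEmpty
            exact (hAe.false j).elim
          · rw [hkv] at hk
            exact rightFirst_of_move j
              (fun hl => hk ((main A (X.moveRight j) hA (hX.moveRight j)).1.2 hl))
      · intro h
        rw [rightFirst_iff] at h
        rcases h with h | ⟨j, hj⟩
        · rcases hX X (Or.inl rfl) (Or.inr h) with hd | hd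
          · have hd' : DeadRightEnd X := DeadRightEnd.mk h (fun i => (hd.isEmpty.false i).elim)
            exact (kernel A A X hA hA hd').1 (Nat.le_add_right _ _)
          · exact (kernel A A X hA hA hd).1 (Nat.le_add_right _ _)
        · exact rightFirst_sum3_z j
            (fun hl => hj ((main A (X.moveRight j) hA (hX.moveRight j)).1.1 hl))
termination_by A X => (A, X)
decreasing_by all_goals solve_by_elim (maxDepth := 8) [Prod.Lex.left, Prod.Lex.right, Subsequent.moveLeft, Subsequent.moveRight, Subsequent.mk_left, Subsequent.mk_right, Subsequent.trans]

end Misere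

namespace Misere
open PGame

theorem misereOutcome_congr {x y : PGame} (h1 : LeftFirst x ↔ LeftFirst y)
    (h2 : RightFirst x ↔ RightFirst y) : misereOutcome x = misereOutcome y := by
  have h1' : (wins x).1 ↔ (wins y).1 := h1
  have h2' : (wins x).2 ↔ (wins y).2 := h2
  classical
  unfold misereOutcome
  exact if_congr h1' (if_congr h2' rfl rfl) (if_congr h2' rfl rfl)

theorem pint_deadRightEnd : ∀ n, DeadRightEnd (pint n)
  | 0 => DeadRightEnd.mk PEmpty.instIsEmpty (fun i => (PEmpty.instIsEmpty.false i).elim)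
  | n + 1 => ⟨PEmpty.instIsEmpty, fun _ => pint_deadRightEnd n⟩

theorem main_outcome : ∀ G : PGame, (DeadLeftEnd G ∨ DeadRightEnd G) →
    ∀ X : PGame, DeadEnding X → misereOutcome (G + -G + X) = misereOutcome X := by
  intro G hG X hX
  rcases hG with hG | hG
  · exact misereOutcome_congr (main G X hG hX).1 (main G X hG hX).2
  · have hA : DeadLeftEnd (-G) := hG.neg
    have hrel : -(G + -G + X) ≡r (-G + -(-G)) + -X :=
      Relabelling.trans (negAddRelabelling _ _)
        (Relabelling.addCongr (negAddRelabelling _ _) (Relabelling.refl _))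
    have m := main (-G) (-X) hA hX.neg
    have e1 : LeftFirst (G + -G + X) ↔ RightFirst (-(G + -G + X)) := by
      have := (wins_neg (-(G + -G + X))).1
      rwa [neg_neg] at this
    have e2 : RightFirst (G + -G + X) ↔ LeftFirst (-(G + -G + X)) := by
      have := (wins_neg (-(G + -G + X))).2
      rwa [neg_neg] at this
    apply misereOutcome_congr
    · rw [e1, (wins_relabelling hrel).2, m.2, (wins_neg X).2]
    · rw [e2, (wins_relabelling hrel).1, m.1, (wins_neg X).1]

end Misere

namespace Misere

/-- every dead end is invertible modulo the universe `E` of dead-ending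
games; in particular every integer is. -/
theorem dead_end_invertible :
    (∀ G : PGame, (DeadLeftEnd G ∨ DeadRightEnd G) →
      ∀ X : PGame, DeadEnding X → misereOutcome (G + -G + X) = misereOutcome X) ∧
    (∀ n : ℕ, ∀ X : PGame, DeadEnding X →
      misereOutcome (pint n + -pint n + X) = misereOutcome X) := by
  constructor
  · exact main_outcome
  · exact fun n X hX => main_outcome (pint n) (Or.inr (pint_deadRightEnd n)) X hX

end Misere
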